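/- Let t > 0 and let μ be a finite positive Borel measure on ℝ³ supported in the sphere {r ∈ ℝ³ : |r| = t} with total mass μ(ℝ³) = t (e.g. μ = (4πt)^{−1} times the surface measure of the sphere of radius t, which is the convolution kernel of the three-dimensional wave propagator sin(2π|D|t)/(2π|D|)). Define T f(x) = ∫_{ℝ³} f(x − r) dμ(r) and let g(y) = 2^{3/4} e^{−π|y|²} be the L²-normalized Gaussian on ℝ³. Then for all z = (x, ξ) and w = (y, η) in ℝ⁶: |⟨T π(z)g, π(w)g⟩_{L²(ℝ³)}| ≤ t · exp(−(π/2)(|x − y| − t)²) · exp(−(π/2)|ξ − η|²). In particular, the Gabor matrix decays rapidly inside the lacuna {|x − y| < t} of the wave propagator. -/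

import Mathlib

open MeasureTheory Complex
open scoped Real

noncomputable section

/-- Time–frequency shift on `ℝ³`: `π(z)f(y) = e^{2πi z₂·y} f(y − z₁)`. -/
def tfShift3 (z : EuclideanSpace ℝ (Fin 3) × EuclideanSpace ℝ (Fin 3))
    (f : EuclideanSpace ℝ (Fin 3) → ℂ) (y : EuclideanSpace ℝ (Fin 3)) : ℂ :=
  Complex.exp ((2 * π * (inner ℝ z.2 y : ℝ)) * Complex.I) * f (y - z.1)

/-- The `L²`-normalized Gaussian on `ℝ³`: `g(y) = 2^{3/4} e^{−π|y|²}`. -/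
def gaussWin3 (y : EuclideanSpace ℝ (Fin 3)) : ℂ :=
  (((2 : ℝ) ^ ((3 : ℝ) / 4) * Real.exp (-π * ‖y‖ ^ 2) : ℝ) : ℂ)

local notation "V3" => EuclideanSpace ℝ (Fin 3)

lemma tfShift3_eq (z : V3 × V3) (u : V3) :
    tfShift3 z gaussWin3 u =
      Complex.exp ((2 * π * (inner ℝ z.2 u : ℝ)) * Complex.I + ((-π * ‖u - z.1‖^2 : ℝ) : ℂ))
        * (((2:ℝ)^((3:ℝ)/4) : ℝ) : ℂ) := by
  rw [tfShift3, gaussWin3, Complex.exp_add, Complex.ofReal_mul, Complex.ofReal_exp]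
  ring

lemma conj_tfShift3_eq (w : V3 × V3) (y : V3) :
    (starRingEnd ℂ) (tfShift3 w gaussWin3 y) =
      Complex.exp (-((2 * π * (inner ℝ w.2 y : ℝ)) * Complex.I) + ((-π * ‖y - w.1‖^2 : ℝ) : ℂ))
        * (((2:ℝ)^((3:ℝ)/4) : ℝ) : ℂ) := by
  rw [tfShift3, gaussWin3]
  simp only [map_mul, ← Complex.exp_conj, Complex.conj_I, Complex.conj_ofReal, map_ofNat,
    Complex.ofReal_mul, Complex.ofReal_exp, Complex.exp_add]
  ring

lemma norm_tfShift3 (z : V3 × V3) (u : V3) :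
    ‖tfShift3 z gaussWin3 u‖ = (2:ℝ)^((3:ℝ)/4) * Real.exp (-π * ‖u - z.1‖^2) := by
  have h2 : (0:ℝ) ≤ (2:ℝ)^((3:ℝ)/4) * Real.exp (-π * ‖u - z.1‖^2) := by positivity
  rw [tfShift3, gaussWin3, norm_mul, Complex.norm_real,
    Real.norm_eq_abs, _root_.abs_of_nonneg h2]
  simp [Complex.norm_exp]

lemma cont_tfShift3 (z : V3 × V3) : Continuous (tfShift3 z gaussWin3) := by
  unfold tfShift3 gaussWin3
  have h1 : Continuous fun y : V3 => (inner ℝ z.2 y : ℝ) := continuous_const.inner continuous_id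
  fun_prop

lemma integrand_eq (z w : V3 × V3) (r y : V3) :
    tfShift3 z gaussWin3 (y - r) * (starRingEnd ℂ) (tfShift3 w gaussWin3 y)
      = (((2:ℝ)^((3:ℝ)/2) * Real.exp (-(π/2) * ‖z.1 + r - w.1‖^2) : ℝ) : ℂ)
          * Complex.exp ((2 * π * ((inner ℝ (z.2 - w.2) ((2:ℝ)⁻¹ • (z.1 + r + w.1)) : ℝ)
              - (inner ℝ z.2 r : ℝ)) : ℂ) * Complex.I)
          * Complex.exp (-(2 * (π:ℂ)) * (‖y - (2:ℝ)⁻¹ • (z.1 + r + w.1)‖:ℂ)^2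
              + (2 * (π:ℂ) * Complex.I)
                * ((inner ℝ (z.2 - w.2) (y - (2:ℝ)⁻¹ • (z.1 + r + w.1)) : ℝ) : ℂ)) := by
  set m : V3 := (2:ℝ)⁻¹ • (z.1 + r + w.1) with hmdef
  set d : V3 := (2:ℝ)⁻¹ • (z.1 + r - w.1) with hddef
  have hv1 : y - r - z.1 = y - m - d := by rw [hmdef, hddef]; module
  have hv2 : y - w.1 = y - m + d := by rw [hmdef, hddef]; module
  have hv3 : z.1 + r - w.1 = (2:ℝ) • d := by rw [hddef]; module
  have h4 : ‖z.1 + r - w.1‖^2 = 4 * ‖d‖^2 := by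
    rw [hv3, norm_smul]
    simp only [Real.norm_eq_abs]
    rw [_root_.abs_of_nonneg (by norm_num : (0:ℝ) ≤ 2)]
    ring
  have hre : (-π * ‖y - r - z.1‖^2) + (-π * ‖y - w.1‖^2)
      = -(π/2) * ‖z.1 + r - w.1‖^2 + (-(2*π)) * ‖y - m‖^2 := by
    rw [hv1, hv2, h4, norm_sub_sq_real, norm_add_sq_real]
    ring
  have him : (inner ℝ z.2 (y - r) : ℝ) - (inner ℝ w.2 y : ℝ)
      = ((inner ℝ (z.2 - w.2) m : ℝ) - (inner ℝ z.2 r : ℝ)) + (inner ℝ (z.2 - w.2) (y - m) : ℝ) := by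
    simp only [inner_sub_left, inner_sub_right]
    ring
  have hS : ((2 * π * (inner ℝ z.2 (y - r) : ℝ)) * Complex.I + ((-π * ‖y - r - z.1‖^2 : ℝ) : ℂ))
        + (-((2 * π * (inner ℝ w.2 y : ℝ)) * Complex.I) + ((-π * ‖y - w.1‖^2 : ℝ) : ℂ))
      = ((-(π/2) * ‖z.1 + r - w.1‖^2 : ℝ) : ℂ)
        + (((2 * π * ((inner ℝ (z.2 - w.2) m : ℝ) - (inner ℝ z.2 r : ℝ)) : ℂ) * Complex.I)
        + (-(2 * (π:ℂ)) * (‖y - m‖:ℂ)^2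
            + (2 * (π:ℂ) * Complex.I) * ((inner ℝ (z.2 - w.2) (y - m) : ℝ) : ℂ))) := by
    have h1 := congrArg (Complex.ofReal) hre
    have h2 := congrArg (Complex.ofReal) him
    push_cast at h1 h2 ⊢
    linear_combination h1 + (2 * (π:ℂ) * Complex.I) * h2
  have hc : (((2:ℝ)^((3:ℝ)/4) : ℝ) : ℂ) * (((2:ℝ)^((3:ℝ)/4) : ℝ) : ℂ)
      = (((2:ℝ)^((3:ℝ)/2) : ℝ) : ℂ) := by
    rw [← Complex.ofReal_mul, ← Real.rpow_add two_pos]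
    norm_num
  have hA : (((2:ℝ)^((3:ℝ)/2) * Real.exp (-(π/2) * ‖z.1 + r - w.1‖^2) : ℝ) : ℂ)
      = (((2:ℝ)^((3:ℝ)/2) : ℝ) : ℂ) * Complex.exp ((-(π/2) * ‖z.1 + r - w.1‖^2 : ℝ) : ℂ) := by
    rw [Complex.ofReal_mul, Complex.ofReal_exp]
  rw [tfShift3_eq, conj_tfShift3_eq, mul_mul_mul_comm, ← Complex.exp_add, hS, hA, ← hc]
  simp only [Complex.exp_add]
  ring

lemma inner_integral_norm (z w : V3 × V3) (r : V3) :
    ‖∫ y, tfShift3 z gaussWin3 (y - r) * (starRingEnd ℂ) (tfShift3 w gaussWin3 y)‖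
      = Real.exp (-(π/2) * ‖z.1 + r - w.1‖^2) * Real.exp (-(π/2) * ‖z.2 - w.2‖^2) := by
  have hb : (0:ℝ) < (2 * (π:ℂ)).re := by
    simp [Real.pi_pos]
  have hGauss := GaussianFourier.integral_cexp_neg_mul_sq_norm_add (V := EuclideanSpace ℝ (Fin 3))
    (b := 2 * (π:ℂ)) hb (2 * (π:ℂ) * Complex.I) (z.2 - w.2)
  simp_rw [integrand_eq z w r, integral_const_mul]
  rw [show (∫ y : V3, Complex.exp (-(2 * (π:ℂ)) * (‖y - (2:ℝ)⁻¹ • (z.1 + r + w.1)‖:ℂ)^2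
        + (2 * (π:ℂ) * Complex.I)
          * ((inner ℝ (z.2 - w.2) (y - (2:ℝ)⁻¹ • (z.1 + r + w.1)) : ℝ) : ℂ)))
      = ∫ y : V3, (fun u : V3 => Complex.exp (-(2 * (π:ℂ)) * (‖u‖:ℂ)^2
        + (2 * (π:ℂ) * Complex.I) * ((inner ℝ (z.2 - w.2) u : ℝ) : ℂ)))
          (y - (2:ℝ)⁻¹ • (z.1 + r + w.1)) from rfl]
  rw [MeasureTheory.integral_sub_right_eq_self
    (μ := (volume : Measure V3))
    (fun u : V3 => Complex.exp (-(2 * (π:ℂ)) * (‖u‖:ℂ)^2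
      + (2 * (π:ℂ) * Complex.I) * ((inner ℝ (z.2 - w.2) u : ℝ) : ℂ)))
    ((2:ℝ)⁻¹ • (z.1 + r + w.1)), hGauss]
  have hπ : (π:ℂ) ≠ 0 := by exact_mod_cast Real.pi_ne_zero
  have h1 : ((π:ℂ)/(2*(π:ℂ)))^((Module.finrank ℝ (EuclideanSpace ℝ (Fin 3)) : ℂ)/2)
      = (((2:ℝ)⁻¹ ^ ((3:ℝ)/2) : ℝ) : ℂ) := by
    have hd : ((π:ℂ)/(2*(π:ℂ))) = (((2:ℝ)⁻¹ : ℝ) : ℂ) := by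
      push_cast
      field_simp
    have hf : ((Module.finrank ℝ (EuclideanSpace ℝ (Fin 3)) : ℂ)/2) = (((3:ℝ)/2 : ℝ) : ℂ) := by
      rw [show Module.finrank ℝ (EuclideanSpace ℝ (Fin 3)) = 3 from by simp]
      push_cast
      norm_num
    rw [hd, hf, ← Complex.ofReal_cpow (by norm_num)]
  have h2 : (2 * (π:ℂ) * Complex.I)^2 * (‖z.2 - w.2‖:ℂ)^2 / (4*(2*(π:ℂ)))
      = ((-(π/2) * ‖z.2 - w.2‖^2 : ℝ) : ℂ) := by
    rw [mul_pow, mul_pow, Complex.I_sq]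
    push_cast
    field_simp
    ring
  rw [h2, ← Complex.ofReal_exp]
  have hθ : (2 * (π:ℂ) * (((inner ℝ (z.2 - w.2) ((2:ℝ)⁻¹ • (z.1 + r + w.1)) : ℝ) : ℂ)
        - ((inner ℝ z.2 r : ℝ) : ℂ))) * Complex.I
      = (((2 * π * ((inner ℝ (z.2 - w.2) ((2:ℝ)⁻¹ • (z.1 + r + w.1)) : ℝ)
        - (inner ℝ z.2 r : ℝ)) : ℝ) : ℂ)) * Complex.I := by
    push_cast
    ring
  rw [h1]
  simp only [norm_mul, Complex.norm_real, Real.norm_eq_abs]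
  rw [show ‖(cexp ((2 * (π:ℂ) * ((inner ℝ (z.2 - w.2) ((2:ℝ)⁻¹ • (z.1 + r + w.1)) : ℝ)
      - (inner ℝ z.2 r : ℝ)) : ℂ) * Complex.I))‖ = 1 from by
    rw [hθ, Complex.norm_exp_ofReal_mul_I]]
  have hone : (2:ℝ)^((3:ℝ)/2) * ((2:ℝ)⁻¹)^((3:ℝ)/2) = 1 := by
    rw [← Real.mul_rpow (by norm_num) (by norm_num)]
    norm_num
  rw [_root_.abs_of_nonneg (by positivity : (0:ℝ) ≤ (2:ℝ)^((3:ℝ)/2)),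
    _root_.abs_of_nonneg (Real.exp_pos (-(π/2) * ‖z.1 + r - w.1‖^2)).le,
    _root_.abs_of_nonneg (by positivity : (0:ℝ) ≤ ((2:ℝ)⁻¹)^((3:ℝ)/2)),
    _root_.abs_of_nonneg (Real.exp_pos _).le]
  linear_combination (Real.exp (-(π/2) * ‖z.1 + r - w.1‖^2)
    * Real.exp (-(π/2) * ‖z.2 - w.2‖^2)) * hone

lemma integrable_gauss_shift (c : V3) {b : ℝ} (hb : 0 < b) :
    Integrable (fun y : V3 => Real.exp (-b * ‖y - c‖^2)) (volume : Measure V3) := by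
  have h := (GaussianFourier.integrable_cexp_neg_mul_sq_norm_add (V := EuclideanSpace ℝ (Fin 3))
      (b := (b:ℂ)) (by simpa using hb) 0 (0 : V3)).norm
  have h' : Integrable (fun v : V3 => Real.exp (-b * ‖v‖^2)) (volume : Measure V3) := by
    simpa [Complex.norm_exp, ← Complex.ofReal_pow] using h
  exact h'.comp_sub_right c

/-- **Gabor matrix bound for the three-dimensional wave propagator (lacunas).** Let
`μ` be a finite positive measure on `ℝ³` supported in the sphere `{|r| = t}` with total
mass `t` (e.g. the wave kernel `(4πt)^{−1} dσ_{∂B_t}`), and let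
`Tf(x) = ∫ f(x − r) dμ(r)`. Then for all `z = (x,ξ)`, `w = (y,η) ∈ ℝ⁶`:
`|⟨Tπ(z)g, π(w)g⟩| ≤ t exp(−(π/2)(|x−y|−t)²) exp(−(π/2)|ξ−η|²)`; in particular, the Gabor
matrix decays rapidly inside the lacuna `{|x−y| < t}`. -/
theorem gabor_matrix_wave_3d_lacuna
    (t : ℝ) (ht : 0 < t) (μ : Measure (EuclideanSpace ℝ (Fin 3))) [IsFiniteMeasure μ]
    (hsupp : μ {r : EuclideanSpace ℝ (Fin 3) | ‖r‖ ≠ t} = 0)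
    (hmass : μ Set.univ = ENNReal.ofReal t)
    (z w : EuclideanSpace ℝ (Fin 3) × EuclideanSpace ℝ (Fin 3)) :
    ‖∫ y, (∫ r, tfShift3 z gaussWin3 (y - r) ∂μ) *
        (starRingEnd ℂ) (tfShift3 w gaussWin3 y)‖ ≤
      t * Real.exp (-(π / 2) * (‖z.1 - w.1‖ - t) ^ 2) *
        Real.exp (-(π / 2) * ‖z.2 - w.2‖ ^ 2) := by
  have step0 : ∀ y : V3, (∫ r, tfShift3 z gaussWin3 (y - r) ∂μ) *
      (starRingEnd ℂ) (tfShift3 w gaussWin3 y)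
      = ∫ r, tfShift3 z gaussWin3 (y - r) * (starRingEnd ℂ) (tfShift3 w gaussWin3 y) ∂μ :=
    fun y => (integral_mul_const _ _).symm
  simp_rw [step0]
  have hcont : Continuous fun p : V3 × V3 =>
      tfShift3 z gaussWin3 (p.1 - p.2) * (starRingEnd ℂ) (tfShift3 w gaussWin3 p.1) := by
    apply Continuous.mul
    · exact (cont_tfShift3 z).comp (continuous_fst.sub continuous_snd)
    · exact continuous_star.comp ((cont_tfShift3 w).comp continuous_fst)
  have hInt : Integrable (Function.uncurry fun (y r : V3) =>
      tfShift3 z gaussWin3 (y - r) * (starRingEnd ℂ) (tfShift3 w gaussWin3 y))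
      ((volume : Measure V3).prod μ) := by
    have hf : Integrable (fun y : V3 =>
        (2:ℝ)^((3:ℝ)/4) * ((2:ℝ)^((3:ℝ)/4) * Real.exp (-π * ‖y - w.1‖^2)))
        (volume : Measure V3) :=
      ((integrable_gauss_shift w.1 Real.pi_pos).const_mul _).const_mul _
    have hg : Integrable (fun _ : V3 => (1:ℝ)) μ := integrable_const 1
    have hbound := hf.mul_prod hg
    apply Integrable.mono' hbound hcont.aestronglyMeasurable
    filter_upwards with p
    rw [norm_mul, norm_tfShift3, RCLike.norm_conj, norm_tfShift3]
    have h1 : Real.exp (-π * ‖p.1 - p.2 - z.1‖^2) ≤ 1 := by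
      rw [Real.exp_le_one_iff]
      nlinarith [Real.pi_pos, sq_nonneg ‖p.1 - p.2 - z.1‖]
    have h2 : (0:ℝ) < (2:ℝ)^((3:ℝ)/4) := by positivity
    have h3 := (Real.exp_pos (-π * ‖p.1 - w.1‖^2)).le
    have h4 := (Real.exp_pos (-π * ‖p.1 - p.2 - z.1‖^2)).le
    rw [mul_one]
    nlinarith [mul_le_of_le_one_right h2.le h1, mul_pos h2 h2,
      mul_le_mul_of_nonneg_right (mul_le_of_le_one_right h2.le h1)
        (mul_nonneg h2.le h3)]
  rw [MeasureTheory.integral_integral_swap hInt]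
  refine le_trans (norm_integral_le_integral_norm _) ?_
  have hae : ∀ᵐ r ∂μ, ‖r‖ = t := by
    rw [MeasureTheory.ae_iff]
    simpa using hsupp
  have hbound2 : ∀ᵐ r ∂μ, ‖∫ y, tfShift3 z gaussWin3 (y - r) *
        (starRingEnd ℂ) (tfShift3 w gaussWin3 y)‖
      ≤ Real.exp (-(π/2) * (‖z.1 - w.1‖ - t)^2) * Real.exp (-(π/2) * ‖z.2 - w.2‖^2) := by
    filter_upwards [hae] with r hr
    rw [inner_integral_norm]
    have hA : ‖z.1 - w.1‖ - t ≤ ‖z.1 + r - w.1‖ := by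
      have h := norm_sub_le (z.1 + r - w.1) r
      rw [show z.1 + r - w.1 - r = z.1 - w.1 from by abel] at h
      linarith [h, hr.ge, hr.le]
    have hB : -(‖z.1 + r - w.1‖) ≤ ‖z.1 - w.1‖ - t := by
      have h := norm_sub_le (z.1 + r - w.1) (z.1 - w.1)
      rw [show z.1 + r - w.1 - (z.1 - w.1) = r from by abel] at h
      rw [hr] at h
      linarith
    have hsq : (‖z.1 - w.1‖ - t)^2 ≤ ‖z.1 + r - w.1‖^2 := sq_le_sq' hB hA
    have := Real.exp_le_exp.mpr (by nlinarith [Real.pi_pos] :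
      -(π/2) * ‖z.1 + r - w.1‖^2 ≤ -(π/2) * (‖z.1 - w.1‖ - t)^2)
    exact mul_le_mul_of_nonneg_right this (Real.exp_pos _).le
  refine le_trans (integral_mono_of_nonneg (Filter.Eventually.of_forall fun r => norm_nonneg _)
    (integrable_const _) hbound2) ?_
  rw [MeasureTheory.integral_const, measureReal_def, hmass, smul_eq_mul, ENNReal.toReal_ofReal ht.le]
  exact le_of_eq (by ring)
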